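/- Let Z be a nonempty finite type, p : Z → ℝ a prior with p(z) ≥ 0 for all z and ∑_z p(z) = 1, and for each z ∈ Z let ν_z be a probability (Borel) measure on ℝ. Fix y ∈ ℝ and assume that for every z ∈ Z: ν_z({y}) = 0, and there exist δ_z > 0 and a nonnegative measurable function f_z : ℝ → ℝ continuous at y such that the restriction of ν_z to (y − δ_z, y + δ_z) equals the restriction of (Lebesgue measure with density f_z) to that interval. Assume further ∑_z p(z)·f_z(y) > 0. Then for every z₀ ∈ Z, (p(z₀)·ν_{z₀}(Iₙ(y))) / (∑_z p(z)·ν_z(Iₙ(y))) → (p(z₀)·f_{z₀}(y)) / (∑_z p(z)·f_z(y)) as n → ∞. -/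

import Mathlib

open MeasureTheory Filter Topology

/-- The dyadic discretization `αₙ(y) = 2^(-n) * ⌈2^n * y⌉`. -/
noncomputable def dyadApprox (n : ℕ) (y : ℝ) : ℝ :=
  (2 : ℝ) ^ (-(n : ℤ)) * (⌈(2 : ℝ) ^ n * y⌉ : ℝ)

/-- The dyadic cell `Iₙ(y) = (αₙ(y) - 2^(-n), αₙ(y)]`. -/
noncomputable def dyadCell (n : ℕ) (y : ℝ) : Set ℝ :=
  Set.Ioc (dyadApprox n y - (2 : ℝ) ^ (-(n : ℤ))) (dyadApprox n y)

lemma two_zpow_pos (n : ℕ) : (0:ℝ) < (2 : ℝ) ^ (-(n : ℤ)) := by positivity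

lemma two_zpow_eq (n : ℕ) : (2 : ℝ) ^ (-(n : ℤ)) = ((2:ℝ) ^ n)⁻¹ := by
  rw [zpow_neg, zpow_natCast]

lemma dyadApprox_ge (n : ℕ) (y : ℝ) : y ≤ dyadApprox n y := by
  rw [dyadApprox, two_zpow_eq, inv_mul_eq_div, le_div_iff₀ (by positivity : (0:ℝ) < (2:ℝ)^n),
    mul_comm]
  exact Int.le_ceil _

lemma dyadApprox_lt (n : ℕ) (y : ℝ) : dyadApprox n y < y + (2 : ℝ) ^ (-(n : ℤ)) := by
  have hp : (0:ℝ) < (2:ℝ) ^ n := by positivity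
  have hinv : ((2:ℝ) ^ n)⁻¹ * (2:ℝ) ^ n = 1 := inv_mul_cancel₀ hp.ne'
  rw [dyadApprox, two_zpow_eq, inv_mul_eq_div, div_lt_iff₀ hp]
  nlinarith [Int.ceil_lt_add_one ((2:ℝ) ^ n * y)]

lemma dyadCell_subset (n : ℕ) (y : ℝ) :
    dyadCell n y ⊆ Set.Ioo (y - (2 : ℝ) ^ (-(n : ℤ))) (y + (2 : ℝ) ^ (-(n : ℤ))) := by
  intro t ht
  obtain ⟨h1, h2⟩ := ht
  constructor
  · have := dyadApprox_ge n y
    linarith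
  · have := dyadApprox_lt n y
    linarith

lemma mem_dyadCell (n : ℕ) (y : ℝ) : y ∈ dyadCell n y :=
  ⟨by have := dyadApprox_lt n y; linarith, dyadApprox_ge n y⟩

lemma dyadCell_vol (n : ℕ) (y : ℝ) :
    volume (dyadCell n y) = ENNReal.ofReal ((2 : ℝ) ^ (-(n : ℤ))) := by
  rw [dyadCell, Real.volume_Ioc]
  ring_nf

lemma key_tendsto (y : ℝ) (μ : Measure ℝ) [IsFiniteMeasure μ] (δ : ℝ) (hδ : 0 < δ)
    (f : ℝ → ℝ) (hm : Measurable f) (h0 : ∀ t, 0 ≤ f t) (hc : ContinuousAt f y)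
    (hres : μ.restrict (Set.Ioo (y - δ) (y + δ)) =
      (volume.withDensity fun t => ENNReal.ofReal (f t)).restrict (Set.Ioo (y - δ) (y + δ))) :
    Tendsto (fun n : ℕ => (2:ℝ) ^ n * (μ (dyadCell n y)).toReal) atTop (𝓝 (f y)) := by
  rw [Metric.tendsto_atTop]
  intro ε hε
  obtain ⟨η, hη, hη'⟩ := Metric.continuousAt_iff.mp hc (ε/2) (half_pos hε)
  have htend : Tendsto (fun n : ℕ => (2:ℝ) ^ (-(n:ℤ))) atTop (𝓝 0) := by
    simp only [two_zpow_eq, ← inv_pow]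
    exact tendsto_pow_atTop_nhds_zero_of_lt_one (by norm_num) (by norm_num)
  obtain ⟨N, hN⟩ := eventually_atTop.mp
    (htend.eventually (eventually_lt_nhds (lt_min hδ hη)))
  refine ⟨N, fun n hn => ?_⟩
  set r : ℝ := (2:ℝ) ^ (-(n:ℤ)) with hr
  have hr0 : 0 < r := two_zpow_pos n
  have hrδ : r < δ := (hN n hn).trans_le (min_le_left _ _)
  have hrη : r < η := (hN n hn).trans_le (min_le_right _ _)
  have hsub : dyadCell n y ⊆ Set.Ioo (y - δ) (y + δ) :=
    (dyadCell_subset n y).trans (Set.Ioo_subset_Ioo (by linarith) (by linarith))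
  have hms : MeasurableSet (dyadCell n y) := measurableSet_Ioc
  have hμ : μ (dyadCell n y) = ∫⁻ t in dyadCell n y, ENNReal.ofReal (f t) := by
    have h1 : μ (dyadCell n y) = μ.restrict (Set.Ioo (y - δ) (y + δ)) (dyadCell n y) := by
      rw [Measure.restrict_apply hms, Set.inter_eq_left.mpr hsub]
    rw [h1, hres, Measure.restrict_apply hms, Set.inter_eq_left.mpr hsub,
      withDensity_apply _ hms]
  have hint : ∫ t in dyadCell n y, f t = (μ (dyadCell n y)).toReal := by
    rw [hμ, integral_eq_lintegral_of_nonneg_ae (ae_of_all _ h0) hm.aestronglyMeasurable]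
  have hvol : (volume (dyadCell n y)).toReal = r := by
    rw [dyadCell_vol, ENNReal.toReal_ofReal hr0.le]
  have hball : ∀ t ∈ dyadCell n y, |f t - f y| ≤ ε / 2 := by
    intro t ht
    have ht' := dyadCell_subset n y ht
    have : dist t y < η := by
      rw [Real.dist_eq, abs_lt]
      constructor <;> [skip; skip] <;> (obtain ⟨a, b⟩ := ht'; linarith)
    have h2 := hη' this
    rw [Real.dist_eq] at h2
    linarith
  have hvol' : volume (dyadCell n y) < ⊤ := by
    rw [dyadCell_vol]; exact ENNReal.ofReal_lt_top
  have hInt : IntegrableOn f (dyadCell n y) volume := by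
    apply Measure.integrableOn_of_bounded hvol'.ne hm.aestronglyMeasurable (M := f y + ε/2)
    filter_upwards [ae_restrict_mem hms] with t ht
    have h3 := hball t ht
    rw [Real.norm_eq_abs, abs_of_nonneg (h0 t)]
    rcases abs_le.mp h3 with ⟨_, _⟩
    linarith
  have hconst : ∫ _t in dyadCell n y, f y = r * f y := by
    rw [setIntegral_const, measureReal_def, hvol, smul_eq_mul]
  have hdiff : ‖∫ t in dyadCell n y, (f t - f y)‖ ≤ ε/2 * (volume (dyadCell n y)).toReal :=
    norm_setIntegral_le_of_norm_le_const hvol'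
      (fun t ht => by rw [Real.norm_eq_abs]; exact hball t ht)
  have hsplit : ∫ t in dyadCell n y, (f t - f y) =
      (μ (dyadCell n y)).toReal - r * f y := by
    rw [integral_sub hInt (integrableOn_const hvol'.ne), hint, hconst]
  have h2n : (2:ℝ)^n * r = 1 := by
    rw [hr, two_zpow_eq]; exact mul_inv_cancel₀ (by positivity)
  rw [Real.dist_eq]
  have hkey : (2:ℝ)^n * (μ (dyadCell n y)).toReal - f y
      = (2:ℝ)^n * ((μ (dyadCell n y)).toReal - r * f y) := by
    rw [mul_sub, ← mul_assoc, h2n, one_mul]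
  rw [hkey, abs_mul, abs_of_nonneg (by positivity : (0:ℝ) ≤ (2:ℝ)^n)]
  have habs : |(μ (dyadCell n y)).toReal - r * f y| ≤ ε/2 * r := by
    rw [← hsplit, ← Real.norm_eq_abs]
    calc ‖∫ t in dyadCell n y, (f t - f y)‖ ≤ ε/2 * (volume (dyadCell n y)).toReal := hdiff
      _ = ε/2 * r := by rw [hvol]
  calc (2:ℝ)^n * |(μ (dyadCell n y)).toReal - r * f y| ≤ (2:ℝ)^n * (ε/2 * r) :=
        mul_le_mul_of_nonneg_left habs (by positivity)
    _ = ε/2 := by rw [show (2:ℝ)^n * (ε/2*r) = ε/2 * ((2:ℝ)^n * r) from by ring, h2n, mul_one]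
    _ < ε := by linarith

/-- If every hypothesis gives the observation `y` zero point mass but a density continuous
at `y`, then conditioning on the shrinking dyadic cells around `y` converges to the
density-weighted posterior. -/
theorem posterior_tendsto_density {Z : Type*} [Fintype Z] [Nonempty Z]
    (p : Z → ℝ) (hp0 : ∀ z, 0 ≤ p z) (hp1 : ∑ z, p z = 1)
    (ν : Z → Measure ℝ) [∀ z, IsProbabilityMeasure (ν z)] (y : ℝ)
    (δ : Z → ℝ) (f : Z → ℝ → ℝ)
    (hatom : ∀ z, ν z {y} = 0)
    (hdens : ∀ z, 0 < δ z ∧ Measurable (f z) ∧ (∀ t, 0 ≤ f z t) ∧ ContinuousAt (f z) y ∧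
      (ν z).restrict (Set.Ioo (y - δ z) (y + δ z)) =
        (volume.withDensity fun t => ENNReal.ofReal (f z t)).restrict
          (Set.Ioo (y - δ z) (y + δ z)))
    (hpos : 0 < ∑ z, p z * f z y) :
    ∀ z₀ : Z, Tendsto
      (fun n : ℕ => (p z₀ * (ν z₀ (dyadCell n y)).toReal) /
        ∑ z, p z * (ν z (dyadCell n y)).toReal)
      atTop
      (𝓝 ((p z₀ * f z₀ y) / ∑ z, p z * f z y)) := by
  intro z₀
  have hkey : ∀ z, Tendsto (fun n : ℕ => (2:ℝ)^n * (ν z (dyadCell n y)).toReal) atTop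
      (𝓝 (f z y)) := fun z =>
    key_tendsto y (ν z) (δ z) (hdens z).1 (f z) (hdens z).2.1 (hdens z).2.2.1
      (hdens z).2.2.2.1 (hdens z).2.2.2.2
  have hnum : Tendsto (fun n : ℕ => p z₀ * ((2:ℝ)^n * (ν z₀ (dyadCell n y)).toReal)) atTop
      (𝓝 (p z₀ * f z₀ y)) := (hkey z₀).const_mul _
  have hden : Tendsto (fun n : ℕ => ∑ z, p z * ((2:ℝ)^n * (ν z (dyadCell n y)).toReal)) atTop
      (𝓝 (∑ z, p z * f z y)) := by
    apply tendsto_finset_sum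
    intro z _
    exact (hkey z).const_mul _
  refine (hnum.div hden hpos.ne').congr fun n => ?_
  have hsum : ∑ z, p z * ((2:ℝ)^n * (ν z (dyadCell n y)).toReal)
      = (2:ℝ)^n * ∑ z, p z * (ν z (dyadCell n y)).toReal := by
    rw [Finset.mul_sum]
    exact Finset.sum_congr rfl fun z _ => by ring
  simp only [Pi.div_apply]
  rw [hsum, show p z₀ * ((2:ℝ)^n * (ν z₀ (dyadCell n y)).toReal)
      = (2:ℝ)^n * (p z₀ * (ν z₀ (dyadCell n y)).toReal) from by ring,
    mul_div_mul_left _ _ (pow_ne_zero n two_ne_zero)]
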